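/- Let u : [a,b] → ℝ be convex and integrable with a < b, α ∈ (0,1), and let w : [a,b] → ℝ be nonnegative, integrable and symmetric about (a+b)/2. Then u((a+b)/2)[𝓘^α_{a+}w(b) + 𝓘^α_{b-}w(a)] ≤ 𝓘^α_{a+}(uw)(b) + 𝓘^α_{b-}(uw)(a) ≤ ((u(a)+u(b))/2)[𝓘^α_{a+}w(b) + 𝓘^α_{b-}w(a)]. -/

import Mathlib

open Real MeasureTheory

theorem fractional_hermite_hadamard_fejer_exp
    (a b : ℝ) (hab : a < b) (u w : ℝ → ℝ) (α : ℝ) (hα : α ∈ Set.Ioo (0:ℝ) 1)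
    (hconv : ∀ x ∈ Set.Icc a b, ∀ y ∈ Set.Icc a b, ∀ μ ∈ Set.Icc (0:ℝ) 1,
      u (μ * x + (1 - μ) * y) ≤ μ * u x + (1 - μ) * u y)
    (hu : IntervalIntegrable u volume a b)
    (hw : IntervalIntegrable w volume a b)
    (hwnonneg : ∀ x ∈ Set.Icc a b, 0 ≤ w x)
    (hwsym : ∀ x ∈ Set.Icc a b, w (a + b - x) = w x) :
    u ((a + b) / 2) *
        ((1 / α) * (∫ s in a..b, Real.exp (-(((1 - α) / α) * (b - s))) * w s) +
          (1 / α) * ∫ s in a..b, Real.exp (-(((1 - α) / α) * (s - a))) * w s) ≤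
      ((1 / α) * (∫ s in a..b, Real.exp (-(((1 - α) / α) * (b - s))) * (u s * w s)) +
        (1 / α) * ∫ s in a..b, Real.exp (-(((1 - α) / α) * (s - a))) * (u s * w s)) ∧
      ((1 / α) * (∫ s in a..b, Real.exp (-(((1 - α) / α) * (b - s))) * (u s * w s)) +
        (1 / α) * ∫ s in a..b, Real.exp (-(((1 - α) / α) * (s - a))) * (u s * w s)) ≤
      ((u a + u b) / 2) *
        ((1 / α) * (∫ s in a..b, Real.exp (-(((1 - α) / α) * (b - s))) * w s) +
          (1 / α) * ∫ s in a..b, Real.exp (-(((1 - α) / α) * (s - a))) * w s) := by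
  obtain ⟨hα0, hα1⟩ := hα
  set c := (1 - α) / α with hc
  have hba : (0:ℝ) < b - a := sub_pos.2 hab
  have hne : b - a ≠ 0 := ne_of_gt hba
  have hmmem : (a + b) / 2 ∈ Set.Icc a b := ⟨by linarith, by linarith⟩
  have hrefl : ∀ s ∈ Set.Icc a b, a + b - s ∈ Set.Icc a b := by
    rintro s ⟨h1, h2⟩; exact ⟨by linarith, by linarith⟩
  -- upper pointwise bound
  have hup : ∀ s ∈ Set.Icc a b, u s ≤ |u a| + |u b| := by
    rintro s ⟨h1, h2⟩
    set t := (b - s) / (b - a) with ht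
    have ht0 : 0 ≤ t := div_nonneg (by linarith) hba.le
    have ht1 : t ≤ 1 := by rw [ht, div_le_one hba]; linarith
    have harg : t * a + (1 - t) * b = s := by
      rw [ht]; linear_combination -(div_mul_cancel₀ (b - s) hne)
    have h := hconv a ⟨le_rfl, hab.le⟩ b ⟨hab.le, le_rfl⟩ t ⟨ht0, ht1⟩
    rw [harg] at h
    have e1 : t * u a ≤ t * |u a| := mul_le_mul_of_nonneg_left (le_abs_self _) ht0
    have e2 : (1 - t) * u b ≤ (1 - t) * |u b| :=
      mul_le_mul_of_nonneg_left (le_abs_self _) (by linarith)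
    have e3 : t * |u a| ≤ 1 * |u a| := mul_le_mul_of_nonneg_right ht1 (abs_nonneg _)
    have e4 : (1 - t) * |u b| ≤ 1 * |u b| :=
      mul_le_mul_of_nonneg_right (by linarith) (abs_nonneg _)
    linarith
  have hsum_ub : ∀ s ∈ Set.Icc a b, u s + u (a + b - s) ≤ u a + u b := by
    rintro s hs
    obtain ⟨h1, h2⟩ := hs
    set t := (b - s) / (b - a) with ht
    have ht0 : 0 ≤ t := div_nonneg (by linarith) hba.le
    have ht1 : t ≤ 1 := by rw [ht, div_le_one hba]; linarith
    have harg1 : t * a + (1 - t) * b = s := by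
      rw [ht]; linear_combination -(div_mul_cancel₀ (b - s) hne)
    have harg2 : (1 - t) * a + (1 - (1 - t)) * b = a + b - s := by
      rw [ht]; linear_combination (div_mul_cancel₀ (b - s) hne)
    have k1 := hconv a ⟨le_rfl, hab.le⟩ b ⟨hab.le, le_rfl⟩ t ⟨ht0, ht1⟩
    have k2 := hconv a ⟨le_rfl, hab.le⟩ b ⟨hab.le, le_rfl⟩ (1 - t) ⟨by linarith, by linarith⟩
    rw [harg1] at k1
    rw [harg2] at k2
    linarith
  have hmid : ∀ s ∈ Set.Icc a b, 2 * u ((a + b) / 2) ≤ u s + u (a + b - s) := by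
    rintro s hs
    have h := hconv s hs (a + b - s) (hrefl s hs) (1/2) ⟨by norm_num, by norm_num⟩
    have harg : (1/2 : ℝ) * s + (1 - 1/2) * (a + b - s) = (a + b) / 2 := by ring
    rw [harg] at h
    linarith
  -- boundedness of u on Icc
  set C := |u a| + |u b| + 2 * |u ((a + b) / 2)| with hC
  have hubd : ∀ s ∈ Set.Icc a b, |u s| ≤ C := by
    intro s hs
    rw [abs_le]
    constructor
    · have h1 := hmid s hs
      have h2 := hup (a + b - s) (hrefl s hs)
      have h3 := neg_abs_le (u ((a + b) / 2))
      simp only [hC]; linarith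
    · have h1 := hup s hs
      have h2 := abs_nonneg (u ((a + b) / 2))
      simp only [hC]; linarith
  have hCnn : 0 ≤ C := le_trans (abs_nonneg _) (hubd a ⟨le_rfl, hab.le⟩)
  -- integrability of u * w
  have hw' : IntegrableOn w (Set.Ioc a b) volume :=
    (intervalIntegrable_iff_integrableOn_Ioc_of_le hab.le).1 hw
  have hu' : IntegrableOn u (Set.Ioc a b) volume :=
    (intervalIntegrable_iff_integrableOn_Ioc_of_le hab.le).1 hu
  have huw : IntervalIntegrable (fun s => u s * w s) volume a b := by
    rw [intervalIntegrable_iff_integrableOn_Ioc_of_le hab.le]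
    apply Integrable.mono (hw'.norm.const_mul C)
      (hu'.aestronglyMeasurable.mul hw'.aestronglyMeasurable)
    filter_upwards [ae_restrict_mem measurableSet_Ioc] with s hs
    have hb := hubd s (Set.Ioc_subset_Icc_self hs)
    have habs : (0:ℝ) ≤ C * ‖w s‖ := mul_nonneg hCnn (norm_nonneg _)
    simp only [Pi.mul_apply]
    rw [Real.norm_eq_abs (C * ‖w s‖), abs_of_nonneg habs, norm_mul]
    exact mul_le_mul_of_nonneg_right hb (norm_nonneg _)
  -- the kernel
  set k : ℝ → ℝ := fun s => Real.exp (-(c * (b - s))) + Real.exp (-(c * (s - a))) with hk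
  have hkcont : Continuous k := by
    rw [hk]; fun_prop
  have hknn : ∀ s, 0 ≤ k s := fun s =>
    add_nonneg (Real.exp_nonneg _) (Real.exp_nonneg _)
  have hksym : ∀ s, k (a + b - s) = k s := by
    intro s
    simp only [hk]
    rw [show b - (a + b - s) = s - a by ring, show a + b - s - a = b - s by ring, add_comm]
  -- integrability of pieces
  have he1cont : Continuous fun s => Real.exp (-(c * (b - s))) := by fun_prop
  have he2cont : Continuous fun s => Real.exp (-(c * (s - a))) := by fun_prop
  have hi1w : IntervalIntegrable (fun s => Real.exp (-(c * (b - s))) * w s) volume a b :=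
    hw.continuousOn_mul he1cont.continuousOn
  have hi2w : IntervalIntegrable (fun s => Real.exp (-(c * (s - a))) * w s) volume a b :=
    hw.continuousOn_mul he2cont.continuousOn
  have hi1uw : IntervalIntegrable (fun s => Real.exp (-(c * (b - s))) * (u s * w s)) volume a b :=
    huw.continuousOn_mul he1cont.continuousOn
  have hi2uw : IntervalIntegrable (fun s => Real.exp (-(c * (s - a))) * (u s * w s)) volume a b :=
    huw.continuousOn_mul he2cont.continuousOn
  have hkw : IntervalIntegrable (fun s => k s * w s) volume a b :=
    hw.continuousOn_mul hkcont.continuousOn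
  have hF : IntervalIntegrable (fun s => k s * (u s * w s)) volume a b :=
    huw.continuousOn_mul hkcont.continuousOn
  have hh : IntervalIntegrable (fun s => k s * (u (a + b - s) * w s)) volume a b := by
    have h0 := (hF.comp_sub_left (a + b)).symm
    rw [show a + b - a = b by ring, show a + b - b = a by ring] at h0
    apply h0.congr
    rw [Set.uIoc_of_le hab.le]
    intro s hs
    have hs' := Set.Ioc_subset_Icc_self hs
    show k (a + b - s) * (u (a + b - s) * w (a + b - s)) = k s * (u (a + b - s) * w s)
    rw [hksym s, hwsym s hs']
  -- sums of integrals as single integrals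
  have hsumw : (∫ s in a..b, Real.exp (-(c * (b - s))) * w s) +
      (∫ s in a..b, Real.exp (-(c * (s - a))) * w s) = ∫ s in a..b, k s * w s := by
    rw [← intervalIntegral.integral_add hi1w hi2w]
    apply intervalIntegral.integral_congr
    intro x _
    simp only [hk]; ring
  have hsumuw : (∫ s in a..b, Real.exp (-(c * (b - s))) * (u s * w s)) +
      (∫ s in a..b, Real.exp (-(c * (s - a))) * (u s * w s)) =
      ∫ s in a..b, k s * (u s * w s) := by
    rw [← intervalIntegral.integral_add hi1uw hi2uw]
    apply intervalIntegral.integral_congr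
    intro x _
    simp only [hk]; ring
  -- reflection identity for the integral
  have hEq : (∫ s in a..b, k s * (u (a + b - s) * w s)) =
      ∫ s in a..b, k s * (u s * w s) := by
    have step1 : (∫ s in a..b, k s * (u (a + b - s) * w s)) =
        ∫ s in a..b, k (a + b - s) * (u (a + b - s) * w (a + b - s)) := by
      apply intervalIntegral.integral_congr
      intro x hx
      rw [Set.uIcc_of_le hab.le] at hx
      show k x * (u (a + b - x) * w x) = k (a + b - x) * (u (a + b - x) * w (a + b - x))
      rw [hksym x, hwsym x hx]
    rw [step1, intervalIntegral.integral_comp_sub_left (fun s => k s * (u s * w s)) (a + b),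
      show a + b - b = a by ring, show a + b - a = b by ring]
  -- the two core inequalities
  have core1 : u ((a + b) / 2) * (∫ s in a..b, k s * w s) ≤
      ∫ s in a..b, k s * (u s * w s) := by
    have hmono : (∫ s in a..b, 2 * u ((a + b) / 2) * (k s * w s)) ≤
        ∫ s in a..b, (k s * (u s * w s) + k s * (u (a + b - s) * w s)) := by
      apply intervalIntegral.integral_mono_on hab.le (hkw.const_mul _) (hF.add hh)
      intro s hs
      have h1 := hmid s hs
      have h2 : 0 ≤ k s * w s := mul_nonneg (hknn s) (hwnonneg s hs)
      nlinarith [mul_le_mul_of_nonneg_right h1 h2]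
    rw [intervalIntegral.integral_const_mul,
      intervalIntegral.integral_add hF hh, hEq] at hmono
    linarith
  have core2 : (∫ s in a..b, k s * (u s * w s)) ≤
      (u a + u b) / 2 * ∫ s in a..b, k s * w s := by
    have hmono : (∫ s in a..b, (k s * (u s * w s) + k s * (u (a + b - s) * w s))) ≤
        ∫ s in a..b, (u a + u b) * (k s * w s) := by
      apply intervalIntegral.integral_mono_on hab.le (hF.add hh) (hkw.const_mul _)
      intro s hs
      have h1 := hsum_ub s hs
      have h2 : 0 ≤ k s * w s := mul_nonneg (hknn s) (hwnonneg s hs)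
      nlinarith [mul_le_mul_of_nonneg_right h1 h2]
    rw [intervalIntegral.integral_const_mul,
      intervalIntegral.integral_add hF hh, hEq] at hmono
    linarith
  have hαnn : 0 ≤ 1 / α := by positivity
  constructor
  · calc u ((a + b) / 2) *
        ((1 / α) * (∫ s in a..b, Real.exp (-(c * (b - s))) * w s) +
          (1 / α) * ∫ s in a..b, Real.exp (-(c * (s - a))) * w s)
        = (1 / α) * (u ((a + b) / 2) *
            ((∫ s in a..b, Real.exp (-(c * (b - s))) * w s) +
              ∫ s in a..b, Real.exp (-(c * (s - a))) * w s)) := by ring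
      _ = (1 / α) * (u ((a + b) / 2) * ∫ s in a..b, k s * w s) := by rw [hsumw]
      _ ≤ (1 / α) * ∫ s in a..b, k s * (u s * w s) :=
          mul_le_mul_of_nonneg_left core1 hαnn
      _ = (1 / α) * ((∫ s in a..b, Real.exp (-(c * (b - s))) * (u s * w s)) +
            ∫ s in a..b, Real.exp (-(c * (s - a))) * (u s * w s)) := by rw [hsumuw]
      _ = (1 / α) * (∫ s in a..b, Real.exp (-(c * (b - s))) * (u s * w s)) +
            (1 / α) * ∫ s in a..b, Real.exp (-(c * (s - a))) * (u s * w s) := by ring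
  · calc (1 / α) * (∫ s in a..b, Real.exp (-(c * (b - s))) * (u s * w s)) +
            (1 / α) * ∫ s in a..b, Real.exp (-(c * (s - a))) * (u s * w s)
        = (1 / α) * ∫ s in a..b, k s * (u s * w s) := by rw [← hsumuw]; ring
      _ ≤ (1 / α) * ((u a + u b) / 2 * ∫ s in a..b, k s * w s) :=
          mul_le_mul_of_nonneg_left core2 hαnn
      _ = (u a + u b) / 2 *
            ((1 / α) * (∫ s in a..b, Real.exp (-(c * (b - s))) * w s) +
              (1 / α) * ∫ s in a..b, Real.exp (-(c * (s - a))) * w s) := by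
          rw [← hsumw]; ring
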